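/- Let u, v be natural numbers with u, v ≥ 3 and 1/u + 1/v < 1/2, set w = u, and let A := b(u,v,u)⁻¹. Then the midpoint vector F₁₂ := e₁ + e₂ satisfies ⟨F₁₂, F₁₂⟩ = 2(A₁₁ + A₁₂) < 0; that is, F₁₂ is a proper (interior) point. -/

import Mathlib

open Real Matrix

/-- The Coxeter–Schläfli matrix `b(u,v,w)` of the orthoscheme. -/
noncomputable def CSMatrix (u v w : ℕ) : Matrix (Fin 4) (Fin 4) ℝ :=
  !![1, -Real.cos (Real.pi / u), 0, 0;
     -Real.cos (Real.pi / u), 1, -Real.cos (Real.pi / v), 0;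
     0, -Real.cos (Real.pi / v), 1, -Real.cos (Real.pi / w);
     0, 0, -Real.cos (Real.pi / w), 1]

/-- `A := b(u,v,w)⁻¹`. -/
noncomputable def Ainv (u v w : ℕ) : Matrix (Fin 4) (Fin 4) ℝ := (CSMatrix u v w)⁻¹

/-- The point scalar product `⟨x,y⟩ := xᵀ A y` with `A = b(u,v,w)⁻¹`. -/
noncomputable def ip (u v w : ℕ) (x y : Fin 4 → ℝ) : ℝ := x ⬝ᵥ (Ainv u v w).mulVec y

/-- The standard basis vector `e_i` of `ℝ⁴`. -/
noncomputable def e (i : Fin 4) : Fin 4 → ℝ := Pi.single i 1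

private lemma CS_det (u v : ℕ) : (CSMatrix u v u).det =
    (1 - Real.cos (Real.pi/u)^2 - Real.cos (Real.pi/v)) *
      (1 - Real.cos (Real.pi/u)^2 + Real.cos (Real.pi/v)) := by
  simp [CSMatrix, Matrix.det_succ_row_zero, Fin.sum_univ_succ, Fin.succAbove, Pi.single,
    Function.update, Fin.ext_iff, Fin.succ, Matrix.updateRow_apply]
  ring

private lemma CS_adj11 (u v : ℕ) :
    (CSMatrix u v u).adjugate 1 1 = 1 - Real.cos (Real.pi/u)^2 := by
  rw [Matrix.adjugate_apply]
  simp [CSMatrix, Matrix.det_succ_row_zero, Fin.sum_univ_succ, Fin.succAbove, Pi.single,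
    Function.update, Fin.ext_iff, Fin.succ, Matrix.updateRow_apply]
  norm_num [show ((3:Fin 4):ℕ) = 3 from rfl]
  try ring

private lemma CS_adj12 (u v : ℕ) :
    (CSMatrix u v u).adjugate 1 2 = Real.cos (Real.pi/v) := by
  rw [Matrix.adjugate_apply]
  simp [CSMatrix, Matrix.det_succ_row_zero, Fin.sum_univ_succ, Fin.succAbove, Pi.single,
    Function.update, Fin.ext_iff, Fin.succ, Matrix.updateRow_apply]
  try ring

private lemma CS_adj21 (u v : ℕ) :
    (CSMatrix u v u).adjugate 2 1 = Real.cos (Real.pi/v) := by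
  rw [Matrix.adjugate_apply]
  simp [CSMatrix, Matrix.det_succ_row_zero, Fin.sum_univ_succ, Fin.succAbove, Pi.single,
    Function.update, Fin.ext_iff, Fin.succ, Matrix.updateRow_apply]
  try ring

private lemma CS_adj22 (u v : ℕ) :
    (CSMatrix u v u).adjugate 2 2 = 1 - Real.cos (Real.pi/u)^2 := by
  rw [Matrix.adjugate_apply]
  simp [CSMatrix, Matrix.det_succ_row_zero, Fin.sum_univ_succ, Fin.succAbove, Pi.single,
    Function.update, Fin.ext_iff, Fin.succ, Matrix.updateRow_apply]
  norm_num [show ((3:Fin 4):ℕ) = 3 from rfl]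
  try ring

private lemma ip_expand (u v : ℕ) : ip u v u (e 1 + e 2) (e 1 + e 2) =
    Ainv u v u 1 1 + Ainv u v u 1 2 + Ainv u v u 2 1 + Ainv u v u 2 2 := by
  simp [ip, e, Matrix.mulVec, dotProduct, Fin.sum_univ_four, Pi.single_apply]
  ring

theorem midpoint_F12_proper (u v : ℕ) (hu : 3 ≤ u) (hv : 3 ≤ v)
    (huv : (1 : ℝ) / u + 1 / v < 1 / 2) :
    ip u v u (e 1 + e 2) (e 1 + e 2) = 2 * (Ainv u v u 1 1 + Ainv u v u 1 2) ∧
    ip u v u (e 1 + e 2) (e 1 + e 2) < 0 := by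
  set a := Real.cos (Real.pi / u) with ha
  set c := Real.cos (Real.pi / v) with hc
  set s := Real.sin (Real.pi / u) with hs
  have hu' : (3:ℝ) ≤ (u:ℝ) := by exact_mod_cast hu
  have hv' : (3:ℝ) ≤ (v:ℝ) := by exact_mod_cast hv
  have hu0 : (0:ℝ) < u := by linarith
  have hv0 : (0:ℝ) < v := by linarith
  have hπ := Real.pi_pos
  have hπu0 : 0 < Real.pi / u := div_pos hπ hu0
  have hπv0 : 0 < Real.pi / v := div_pos hπ hv0
  -- from huv : π/v < π/2 - π/u
  have hlt : Real.pi / v < Real.pi / 2 - Real.pi / u := by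
    have h1 : Real.pi / u + Real.pi / v < Real.pi / 2 := by
      have := mul_lt_mul_of_pos_left huv hπ
      calc Real.pi / u + Real.pi / v = Real.pi * ((1:ℝ)/u + 1/v) := by ring
        _ < Real.pi * (1/2) := this
        _ = Real.pi / 2 := by ring
    linarith
  have hπu_lt : Real.pi / u < Real.pi / 2 := by linarith
  have hs_pos : 0 < s := Real.sin_pos_of_pos_of_lt_pi hπu0 (by linarith)
  have hs_le : s ≤ 1 := Real.sin_le_one _
  -- c > s
  have hcs : s < c := by
    have h2 : Real.cos (Real.pi / 2 - Real.pi / u) < Real.cos (Real.pi / v) := by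
      apply Real.cos_lt_cos_of_nonneg_of_le_pi (le_of_lt hπv0) (by linarith) hlt
    rwa [Real.cos_pi_div_two_sub] at h2
  have hsq : 1 - a^2 = s^2 := by
    have := Real.sin_sq_add_cos_sq (Real.pi / u)
    rw [ha, hs]; nlinarith [this]
  have hc_pos : 0 < c := lt_trans hs_pos hcs
  have hnum_neg : 1 - a^2 - c < 0 := by
    rw [hsq]; nlinarith
  have hnum_pos : 0 < 1 - a^2 + c := by rw [hsq]; nlinarith
  have hD : (CSMatrix u v u).det = (1 - a^2 - c) * (1 - a^2 + c) := CS_det u v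
  have hDneg : (CSMatrix u v u).det < 0 := by
    rw [hD]; exact mul_neg_of_neg_of_pos hnum_neg hnum_pos
  have hD0 : (CSMatrix u v u).det ≠ 0 := ne_of_lt hDneg
  have hinv : ∀ i j, Ainv u v u i j =
      ((CSMatrix u v u).det)⁻¹ * (CSMatrix u v u).adjugate i j := by
    intro i j
    rw [Ainv, Matrix.inv_def, Matrix.smul_apply, Ring.inverse_eq_inv', smul_eq_mul]
  have h11 : Ainv u v u 1 1 = ((CSMatrix u v u).det)⁻¹ * (1 - a^2) := by
    rw [hinv, CS_adj11]
  have h12 : Ainv u v u 1 2 = ((CSMatrix u v u).det)⁻¹ * c := by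
    rw [hinv, CS_adj12]
  have h21 : Ainv u v u 2 1 = ((CSMatrix u v u).det)⁻¹ * c := by
    rw [hinv, CS_adj21]
  have h22 : Ainv u v u 2 2 = ((CSMatrix u v u).det)⁻¹ * (1 - a^2) := by
    rw [hinv, CS_adj22]
  have hip : ip u v u (e 1 + e 2) (e 1 + e 2) =
      ((CSMatrix u v u).det)⁻¹ * (2 * (1 - a^2) + 2 * c) := by
    rw [ip_expand, h11, h12, h21, h22]; ring
  constructor
  · rw [hip, h11, h12]; ring
  · rw [hip]
    have hDinv : ((CSMatrix u v u).det)⁻¹ < 0 := inv_lt_zero.mpr hDneg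
    have : 0 < 2 * (1 - a^2) + 2 * c := by rw [hsq]; nlinarith
    exact mul_neg_of_neg_of_pos hDinv this
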